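/- For every k ≥ 4 and every N, there exists a directed graph with more than N vertices containing exactly k directed Hamiltonian cycles. -/

import Mathlib

/-- A directed Hamiltonian cycle in the digraph with arc relation `R`, encoded (up to
cyclic rotation) by its successor permutation: a cyclic permutation of all the vertices
each of whose steps is an arc of the digraph. -/
def IsHamCycle {V : Type*} [Fintype V] [DecidableEq V] (R : V → V → Prop)
    (σ : Equiv.Perm V) : Prop :=
  σ.IsCycle ∧ σ.support = Finset.univ ∧ ∀ v, R v (σ v)

namespace HamAux

def Rel (m k : ℕ) (a b : Fin m) : Prop :=
  (1 ≤ a.val ∧ a.val + 1 = b.val) ∨ (a.val = m - 1 ∧ b.val = 1) ∨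
    (1 ≤ a.val ∧ a.val ≤ k ∧ b.val = 0) ∨ (a.val = 0 ∧ 2 ≤ b.val ∧ b.val ≤ k + 1)

def sf (m j v : ℕ) : ℕ :=
  if v = 0 then j + 1 else if v = j then 0 else if v = m - 1 then 1 else v + 1

def sg (m j w : ℕ) : ℕ :=
  if w = 0 then j else if w = j + 1 then 0 else if w = 1 then m - 1 else w - 1

theorem sf_lt {m j : ℕ} (hj : 1 ≤ j) (hjm : j + 2 ≤ m) {v : ℕ} (hv : v < m) :
    sf m j v < m := by
  unfold sf; split_ifs <;> first | omega | exact False.elim (by assumption)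

theorem sg_lt {m j : ℕ} (hj : 1 ≤ j) (hjm : j + 2 ≤ m) {w : ℕ} (hw : w < m) :
    sg m j w < m := by
  unfold sg; split_ifs <;> first | omega | exact False.elim (by assumption)

theorem sg_sf {m j : ℕ} (hj : 1 ≤ j) (hjm : j + 2 ≤ m) {v : ℕ} (hv : v < m) :
    sg m j (sf m j v) = v := by
  unfold sf sg; split_ifs <;> first | omega | exact False.elim (by assumption)

theorem sf_sg {m j : ℕ} (hj : 1 ≤ j) (hjm : j + 2 ≤ m) {w : ℕ} (hw : w < m) :
    sf m j (sg m j w) = w := by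
  unfold sf sg; split_ifs <;> first | omega | exact False.elim (by assumption)

def sig (m j : ℕ) (hj : 1 ≤ j) (hjm : j + 2 ≤ m) : Equiv.Perm (Fin m) where
  toFun v := ⟨sf m j v.val, sf_lt hj hjm v.isLt⟩
  invFun w := ⟨sg m j w.val, sg_lt hj hjm w.isLt⟩
  left_inv v := Fin.ext (sg_sf hj hjm v.isLt)
  right_inv w := Fin.ext (sf_sg hj hjm w.isLt)

theorem sig_val {m j : ℕ} (hj : 1 ≤ j) (hjm : j + 2 ≤ m) (v : Fin m) :
    (sig m j hj hjm v).val = sf m j v.val := rfl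

theorem sig_inv_val {m j : ℕ} (hj : 1 ≤ j) (hjm : j + 2 ≤ m) (w : Fin m) :
    ((sig m j hj hjm)⁻¹ w).val = sg m j w.val := rfl

theorem sig_congr {m j1 j2 : ℕ} (h : j1 = j2) (p1 : 1 ≤ j1) (q1 : j1 + 2 ≤ m)
    (p2 : 1 ≤ j2) (q2 : j2 + 2 ≤ m) : sig m j1 p1 q1 = sig m j2 p2 q2 := by
  subst h; rfl

theorem sig_arc {m k j : ℕ} (hj : 1 ≤ j) (hjk : j ≤ k) (hm : k + 2 ≤ m)
    (hjm : j + 2 ≤ m) (v : Fin m) : Rel m k v (sig m j hj hjm v) := by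
  have hv := v.isLt
  rw [Rel, sig_val]
  unfold sf
  split_ifs <;> omega

theorem sig_iter1 {m j : ℕ} (hj : 1 ≤ j) (hjm : j + 2 ≤ m) :
    ∀ s, 1 ≤ s → j + s ≤ m - 1 →
      ((sig m j hj hjm)^[s] ⟨0, by omega⟩).val = j + s := by
  intro s
  induction s with
  | zero => intro h; exact absurd h (by omega)
  | succ s ih =>
    intro _ hle
    rw [Function.iterate_succ_apply', sig_val]
    rcases Nat.eq_zero_or_pos s with hs | hs
    · subst hs
      show sf m j ((sig m j hj hjm)^[0] ⟨0, by omega⟩).val = j + 1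
      unfold sf
      simp
    · rw [ih hs (by omega)]
      unfold sf
      split_ifs <;> omega

theorem sig_iter2 {m j : ℕ} (hj : 1 ≤ j) (hjm : j + 2 ≤ m) :
    ∀ s, 1 ≤ s → s ≤ j →
      ((sig m j hj hjm)^[m - 1 - j + s] ⟨0, by omega⟩).val = s := by
  intro s
  induction s with
  | zero => intro h; exact absurd h (by omega)
  | succ s ih =>
    intro _ hle
    rw [show m - 1 - j + (s + 1) = (m - 1 - j + s) + 1 by omega]
    rw [Function.iterate_succ_apply', sig_val]
    rcases Nat.eq_zero_or_pos s with hs | hs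
    · subst hs
      rw [show m - 1 - j + 0 = m - 1 - j by omega]
      rw [sig_iter1 hj hjm (m - 1 - j) (by omega) (by omega)]
      unfold sf
      split_ifs <;> omega
    · rw [ih hs (by omega)]
      unfold sf
      split_ifs <;> omega

theorem sig_reach {m j : ℕ} (hj : 1 ≤ j) (hjm : j + 2 ≤ m) (y : Fin m) :
    ∃ t : ℕ, (sig m j hj hjm)^[t] ⟨0, by omega⟩ = y := by
  have hy := y.isLt
  rcases Nat.eq_zero_or_pos y.val with h0 | h0
  · exact ⟨0, by apply Fin.ext; simpa using h0.symm⟩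
  rcases le_or_gt y.val j with hle | hlt
  · exact ⟨m - 1 - j + y.val, Fin.ext (sig_iter2 hj hjm y.val h0 hle)⟩
  · refine ⟨y.val - j, Fin.ext ?_⟩
    rw [sig_iter1 hj hjm (y.val - j) (by omega) (by omega)]
    omega

theorem sig_isCycle {m j : ℕ} (hj : 1 ≤ j) (hjm : j + 2 ≤ m) :
    (sig m j hj hjm).IsCycle := by
  refine ⟨⟨0, by omega⟩, ?_, ?_⟩
  · apply Fin.ne_of_val_ne
    rw [sig_val]
    unfold sf
    simp
  · intro y _
    obtain ⟨t, ht⟩ := sig_reach hj hjm y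
    exact ⟨(t : ℤ), by rw [zpow_natCast, ← Equiv.Perm.iterate_eq_pow]; exact ht⟩

theorem sig_support {m j : ℕ} (hj : 1 ≤ j) (hjm : j + 2 ≤ m) :
    (sig m j hj hjm).support = Finset.univ := by
  apply Finset.eq_univ_iff_forall.mpr
  intro v
  rw [Equiv.Perm.mem_support]
  have hv := v.isLt
  apply Fin.ne_of_val_ne
  rw [sig_val]
  unfold sf
  split_ifs <;> omega

theorem forced {m k : ℕ} (hk : 1 ≤ k) (hm : k + 2 ≤ m) (σ : Equiv.Perm (Fin m))
    (h : ∀ v, Rel m k v (σ v)) :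
    ∃ (j : ℕ) (hj : 1 ≤ j) (hjk : j ≤ k),
      σ = sig m j hj (by omega) ∧ (σ⁻¹ ⟨0, by omega⟩).val = j := by
  set z : Fin m := ⟨0, by omega⟩ with hz
  set a : Fin m := σ⁻¹ z with hadef
  have ha : σ a = z := Equiv.apply_symm_apply σ z
  have hra := h a
  rw [ha] at hra
  have haz : z.val = 0 := rfl
  have h1 : 1 ≤ a.val ∧ a.val ≤ k := by
    rcases hra with ⟨_, h'⟩ | ⟨_, h'⟩ | ⟨h1, h2, _⟩ | ⟨_, h', _⟩ <;>
      first | exact ⟨h1, h2⟩ | omega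
  refine ⟨a.val, h1.1, h1.2, ?_, rfl⟩
  apply Equiv.ext
  intro v
  apply Fin.ext
  rw [sig_val]
  have hv := v.isLt
  have hσv := (σ v).isLt
  have hrv := h v
  unfold sf
  by_cases hv0 : v.val = 0
  · rw [if_pos hv0]
    -- σ 0 = a + 1
    have hc : a.val + 1 < m := by omega
    set c : Fin m := ⟨a.val + 1, hc⟩ with hcdef
    set w : Fin m := σ⁻¹ c with hwdef
    have hw : σ w = c := Equiv.apply_symm_apply σ c
    have hrw := h w
    rw [hw] at hrw
    have hcval : c.val = a.val + 1 := rfl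
    have hw0 : w.val = 0 := by
      rcases hrw with ⟨_, h'⟩ | ⟨_, h'⟩ | ⟨_, _, h'⟩ | ⟨h', _, _⟩
      · -- w.val + 1 = a.val + 1, so w = a, contradiction
        exfalso
        have hwa : w = a := Fin.ext (by omega)
        rw [hwa, ha] at hw
        have := congrArg Fin.val hw
        rw [haz, hcval] at this
        omega
      · omega
      · omega
      · exact h'
    have hwv : w = v := Fin.ext (by omega)
    rw [hwv] at hw
    rw [hw]
  · by_cases hva : v.val = a.val
    · rw [if_neg hv0, if_pos hva]
      have : v = a := Fin.ext hva
      rw [this, ha]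
    · by_cases hvm : v.val = m - 1
      · rw [if_neg hv0, if_neg hva, if_pos hvm]
        rcases hrv with ⟨_, h'⟩ | ⟨_, h'⟩ | ⟨_, h2, _⟩ | ⟨h', _, _⟩ <;> omega
      · rw [if_neg hv0, if_neg hva, if_neg hvm]
        rcases hrv with ⟨_, h'⟩ | ⟨h', _⟩ | ⟨_, _, h'⟩ | ⟨h', _, _⟩
        · omega
        · omega
        · exfalso
          have : σ v = z := Fin.ext (by rw [haz]; exact h')
          have : v = a := by
            rw [hadef, ← this, ← Equiv.Perm.mul_apply, inv_mul_cancel, Equiv.Perm.one_apply]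
          exact hva (congrArg Fin.val this)
        · omega

theorem count_eq {m k : ℕ} (hk : 1 ≤ k) (hm : k + 2 ≤ m) :
    Nat.card {σ : Equiv.Perm (Fin m) // IsHamCycle (Rel m k) σ} = k := by
  have hm3 : 3 ≤ m := by omega
  have e : {σ : Equiv.Perm (Fin m) // IsHamCycle (Rel m k) σ} ≃ Set.Icc 1 k := by
    refine
      { toFun := fun p => ⟨(p.1⁻¹ ⟨0, by omega⟩).val, ?_⟩
        invFun := fun p =>
          ⟨sig m p.1 (Set.mem_Icc.mp p.2).1
            (by have := (Set.mem_Icc.mp p.2).2; omega), ?_⟩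
        left_inv := ?_
        right_inv := ?_ }
    · obtain ⟨j, hj, hjk, heq, hval⟩ := forced hk hm p.1 p.2.2.2
      rw [Set.mem_Icc, hval]
      exact ⟨hj, hjk⟩
    · refine ⟨sig_isCycle _ _, sig_support _ _, fun v => ?_⟩
      exact sig_arc (Set.mem_Icc.mp p.2).1 (Set.mem_Icc.mp p.2).2 hm _ v
    · rintro ⟨σ, hσ⟩
      apply Subtype.ext
      obtain ⟨j, hj, hjk, heq, hval⟩ := forced hk hm σ hσ.2.2
      refine Eq.trans ?_ heq.symm
      exact sig_congr hval (by omega) (by omega) hj (by omega)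
    · rintro ⟨j, hjmem⟩
      obtain ⟨hj, hjk⟩ := Set.mem_Icc.mp hjmem
      apply Subtype.ext
      rfl
  rw [Nat.card_congr e, Nat.card_eq_card_toFinset]
  simp

end HamAux

/-- For every `k ≥ 4` and every `N`, there is a directed graph with more than `N`
vertices containing exactly `k` directed Hamiltonian cycles (counted up to rotation). -/
theorem exists_large_digraph_with_k_ham_cycles (k N : ℕ) (hk : 4 ≤ k) :
    ∃ m : ℕ, N < m ∧ ∃ R : Fin m → Fin m → Prop,
      Nat.card {σ : Equiv.Perm (Fin m) // IsHamCycle R σ} = k := by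
  refine ⟨N + k + 2, by omega, HamAux.Rel (N + k + 2) k, ?_⟩
  exact HamAux.count_eq (by omega) (by omega)
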